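/- Fix E ∈ ℂ with E ≠ 0. There exists R > 0 such that for all real r ≥ R, the polynomial Q(σ) = σ²(2 − σ/r)(2 + σ) + 2|E|²/r has no real roots σ in the interval [−1, 1]; equivalently, Q(σ) > 0 for all σ ∈ [−1,1]. Consequently the dispersion polynomial P has no real roots τ with |τ/r − 1| ≤ 1 when ζ = −r − r² and |ξ| = r. -/

import Mathlib

/-- for `r` large, `Q(σ) = σ²(2 − σ/r)(2 + σ) + 2|E|²/r > 0` on
`[−1,1]`; consequently the dispersion polynomial has no real roots `τ` with
`|τ/r − 1| ≤ 1` when `ζ = −r − r²`, `|ξ| = r`. -/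
theorem stmt3 (E : ℂ) (hE : E ≠ 0) :
    ∃ R > (0 : ℝ), ∀ r : ℝ, R ≤ r →
      (∀ σ ∈ Set.Icc (-1 : ℝ) 1,
        σ ^ 2 * (2 - σ / r) * (2 + σ) + 2 * ‖E‖ ^ 2 / r > 0) ∧
      (∀ τ : ℝ, |τ / r - 1| ≤ 1 →
        (r ^ 2 - τ ^ 2) * (r ^ 4 - (τ + (-r - r ^ 2)) ^ 2) -
          2 * ‖E‖ ^ 2 * r ^ 4 ≠ 0) := by
  refine ⟨1, one_pos, fun r hr => ?_⟩
  have hr0 : (0 : ℝ) < r := lt_of_lt_of_le one_pos hr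
  have hEpos : 0 < ‖E‖ := norm_pos_iff.mpr hE
  have hQ : ∀ σ ∈ Set.Icc (-1 : ℝ) 1,
      σ ^ 2 * (2 - σ / r) * (2 + σ) + 2 * ‖E‖ ^ 2 / r > 0 := by
    rintro σ ⟨h1, h2⟩
    have h3 : σ / r ≤ 1 := by
      rw [div_le_one hr0]; linarith
    have h4 : 0 < 2 * ‖E‖ ^ 2 / r := by positivity
    have h5 : 0 ≤ σ ^ 2 * (2 - σ / r) * (2 + σ) :=
      mul_nonneg (mul_nonneg (sq_nonneg σ) (by linarith)) (by linarith)
    linarith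
  refine ⟨hQ, fun τ hτ => ?_⟩
  have hmem : τ / r - 1 ∈ Set.Icc (-1 : ℝ) 1 := abs_le.mp hτ
  have hQσ := hQ _ hmem
  have hτσ : τ = r * (τ / r - 1) + r := by field_simp; ring
  set σ := τ / r - 1 with hσ
  have key : (r ^ 2 - τ ^ 2) * (r ^ 4 - (τ + (-r - r ^ 2)) ^ 2) -
      2 * ‖E‖ ^ 2 * r ^ 4 =
      -r ^ 5 * (σ ^ 2 * (2 - σ / r) * (2 + σ) + 2 * ‖E‖ ^ 2 / r) := by
    rw [hτσ]
    field_simp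
    ring
  rw [key]
  have hr5 : 0 < r ^ 5 := by positivity
  nlinarith
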